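/- Let 𝔠 be an acyclic cycle orientation configuration on a finite connected graph G (no nontrivial nonnegative integer combination of the oriented cycle vectors is zero). Then in each cycle reversal class of orientations of G there is at most one 𝔠-faithful orientation, i.e., two distinct orientations in the same cycle reversal class cannot both have all of their directed cycles oriented as prescribed by 𝔠. -/

import Mathlib

open scoped Classical
set_option linter.unusedSectionVars false
set_option linter.unreachableTactic false
set_option linter.unusedTactic false
set_option maxHeartbeats 1000000

variable {V E : Type} [Fintype V] [Fintype E] [DecidableEq V] [DecidableEq E]

/-- Reachability between vertices using (undirected) edges from the set `A`. -/
def ReachIn (ι : E → V × V) (A : Set E) (a b : V) : Prop :=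
  Relation.ReflTransGen (fun x y => ∃ e ∈ A, ι e = (x, y) ∨ ι e = (y, x)) a b

/-- The graph with edge set `A` (on all of `V`) is connected. -/
def Conn (ι : E → V × V) (A : Set E) : Prop := ∀ a b : V, ReachIn ι A a b

/-- `C : E → ℤ` is the signed indicator vector of a (simple, directed) cycle:
entries in `{-1,0,1}`, nonempty support, zero boundary, every vertex meets
0 or 2 support edges, and the support is connected. -/
def IsCycleVec (ι : E → V × V) (C : E → ℤ) : Prop :=
  (∀ e, C e = 0 ∨ C e = 1 ∨ C e = -1) ∧
  (∃ e, C e ≠ 0) ∧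
  (∀ v : V, ∑ e : E, C e *
      ((if (ι e).2 = v then 1 else 0) - (if (ι e).1 = v then 1 else 0)) = 0) ∧
  (∀ v : V,
    (Finset.univ.filter fun e => C e ≠ 0 ∧ ((ι e).1 = v ∨ (ι e).2 = v)).card = 0 ∨
    (Finset.univ.filter fun e => C e ≠ 0 ∧ ((ι e).1 = v ∨ (ι e).2 = v)).card = 2) ∧
  (∀ a b : V, (∃ e, C e ≠ 0 ∧ ((ι e).1 = a ∨ (ι e).2 = a)) →
    (∃ e, C e ≠ 0 ∧ ((ι e).1 = b ∨ (ι e).2 = b)) →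
    ReachIn ι {e | C e ≠ 0} a b)

/-- An orientation of `G`, recorded as a sign for each edge relative to the reference
orientation `ι`. -/
def IsOrient (σ : E → ℤ) : Prop := ∀ e, σ e = 1 ∨ σ e = -1

/-- `C` is a directed cycle of the orientation `σ`. -/
def DirCycle (ι : E → V × V) (σ : E → ℤ) (C : E → ℤ) : Prop :=
  IsCycleVec ι C ∧ ∀ e, C e ≠ 0 → C e = σ e

/-- One cycle reversal step: reverse all edges of a directed cycle of `σ`. -/
def RevStep (ι : E → V × V) (σ τ : E → ℤ) : Prop :=
  ∃ C : E → ℤ, DirCycle ι σ C ∧ ∀ e, τ e = if C e ≠ 0 then -σ e else σ e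

/-- A cycle orientation configuration: a choice, for each cycle of `G`, of exactly one of
its two orientations. -/
def IsConfig (ι : E → V × V) (𝔠 : Set (E → ℤ)) : Prop :=
  (∀ C ∈ 𝔠, IsCycleVec ι C) ∧
  (∀ C : E → ℤ, IsCycleVec ι C → (C ∈ 𝔠 ↔ (fun e => -C e) ∉ 𝔠))

/-- Acyclicity of a configuration: no nontrivial nonnegative integer combination of its
oriented cycle vectors vanishes. -/
def ConfigAcyclic (𝔠 : Set (E → ℤ)) : Prop :=
  ∀ (k : ℕ) (Cs : Fin k → E → ℤ) (n : Fin k → ℕ),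
    (∀ i, Cs i ∈ 𝔠) → (∀ e, ∑ i, (n i : ℤ) * Cs i e = 0) → ∀ i, n i = 0

/-- `σ` is `𝔠`-faithful: every directed cycle of `σ` is oriented as prescribed by `𝔠`. -/
def Faithful (ι : E → V × V) (𝔠 : Set (E → ℤ)) (σ : E → ℤ) : Prop :=
  ∀ C : E → ℤ, DirCycle ι σ C → C ∈ 𝔠

/-- for an acyclic cycle orientation configuration `𝔠`, each cycle reversal
class contains at most one `𝔠`-faithful orientation. -/
lemma aux_neg_cycleVec (ι : E → V × V) {C : E → ℤ} (h : IsCycleVec ι C) :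
    IsCycleVec ι (fun e => -C e) := by
  obtain ⟨h1, h2, h3, h4, h5⟩ := h
  refine ⟨?_, ?_, ?_, ?_, ?_⟩
  · intro e; rcases h1 e with h|h|h <;> simp [h]
  · obtain ⟨e, he⟩ := h2; exact ⟨e, by simpa using he⟩
  · intro v
    have h := h3 v
    simp only [neg_mul, Finset.sum_neg_distrib, h, neg_zero]
  · intro v
    have : (Finset.univ.filter fun e => (fun e => -C e) e ≠ 0 ∧ ((ι e).1 = v ∨ (ι e).2 = v))
        = (Finset.univ.filter fun e => C e ≠ 0 ∧ ((ι e).1 = v ∨ (ι e).2 = v)) := by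
      ext e; simp
    rw [this]; exact h4 v
  · intro a b ha hb
    have hs : {e | (fun e => -C e) e ≠ 0} = {e | C e ≠ 0} := by ext e; simp
    rw [hs]
    exact h5 a b (by simpa using ha) (by simpa using hb)

/-- any cycle vector has an even sum over the loops at any fixed vertex. -/
lemma aux_loop_parity (ι : E → V × V) {C : E → ℤ} (h : IsCycleVec ι C) (v : V) :
    Even (∑ e ∈ Finset.univ.filter (fun e => ι e = (v, v)), C e) := by
  obtain ⟨h1, h2, h3, h4, h5⟩ := h
  classical
  set dv := Finset.univ.filter (fun e => C e ≠ 0 ∧ ((ι e).1 = v ∨ (ι e).2 = v)) with hdv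
  set sl := Finset.univ.filter (fun e => C e ≠ 0 ∧ ι e = (v, v)) with hsl
  have hsub' : sl ⊆ Finset.univ.filter (fun e => ι e = (v, v)) := by
    intro e he
    rw [hsl, Finset.mem_filter] at he
    exact Finset.mem_filter.mpr ⟨Finset.mem_univ _, he.2.2⟩
  have hsum : (∑ e ∈ Finset.univ.filter (fun e => ι e = (v, v)), C e) = ∑ e ∈ sl, C e := by
    refine (Finset.sum_subset hsub' (fun e he hns => ?_)).symm
    by_contra hne
    exact hns (by rw [hsl, Finset.mem_filter]; exact ⟨Finset.mem_univ _, hne, (Finset.mem_filter.mp he).2⟩)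
  rw [hsum]
  have hsub : sl ⊆ dv := by
    intro e he
    simp only [hsl, Finset.mem_filter] at he
    simp only [hdv, Finset.mem_filter]
    exact ⟨he.1, he.2.1, Or.inl (by rw [he.2.2])⟩
  -- card of sl is ≤ 2
  have hslcard : sl.card ≤ 2 := by
    have h := Finset.card_le_card hsub
    have hdvcard : dv.card = 0 ∨ dv.card = 2 := by rw [hdv]; exact h4 v
    omega
  interval_cases hc : sl.card
  · rw [Finset.card_eq_zero] at hc; simp [hc]
  · -- card 1 : contradiction via boundary
    exfalso
    rw [Finset.card_eq_one] at hc
    obtain ⟨a, ha⟩ := hc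
    have hadv : a ∈ dv := hsub (by simp [ha])
    have ha' : C a ≠ 0 ∧ ι a = (v, v) := by
      have : a ∈ sl := by simp [ha]
      simpa [hsl] using this
    -- dv has card 2
    have hdv2 : dv.card = 2 := by
      have hdvcard : dv.card = 0 ∨ dv.card = 2 := by rw [hdv]; exact h4 v
      rcases hdvcard with h0 | h2'
      · exfalso; rw [Finset.card_eq_zero] at h0
        rw [h0] at hadv; simp at hadv
      · exact h2'
    obtain ⟨x, y, hxy, hdveq⟩ := Finset.card_eq_two.mp hdv2
    -- a is one of x, y; let b be the other
    have hax : a = x ∨ a = y := by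
      rw [hdveq] at hadv; simpa using hadv
    obtain ⟨b, hb, hab⟩ : ∃ b, b ∈ dv ∧ b ≠ a ∧ dv = {a, b} := by
      rcases hax with rfl | rfl
      · exact ⟨y, by simp [hdveq], Ne.symm hxy, by rw [hdveq]⟩
      · exact ⟨x, by simp [hdveq], hxy, by rw [hdveq, Finset.pair_comm]⟩
    have hbdv : C b ≠ 0 ∧ ((ι b).1 = v ∨ (ι b).2 = v) := by simpa [hdv] using hb
    have hbnl : ι b ≠ (v, v) := by
      intro hcon
      have : b ∈ sl := by simp [hsl, hbdv.1, hcon]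
      rw [ha] at this; simp at this; exact hab.1 this
    -- boundary at v
    have hb3 := h3 v
    have hz : ∀ e, e ∉ dv → C e * ((if (ι e).2 = v then (1:ℤ) else 0) - (if (ι e).1 = v then 1 else 0)) = 0 := by
      intro e he
      simp only [hdv, Finset.mem_filter, Finset.mem_univ, true_and, not_and_or, not_or] at he
      rcases he with he | ⟨he1, he2⟩
      · rw [not_not] at he; simp [he]
      · simp [he1, he2]
    rw [← Finset.sum_subset (Finset.subset_univ dv) (fun e _ he => hz e he)] at hb3
    rw [hab.2] at hb3
    rw [Finset.sum_pair (Ne.symm hab.1)] at hb3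
    have hta : ((if (ι a).2 = v then (1:ℤ) else 0) - (if (ι a).1 = v then 1 else 0)) = 0 := by
      rw [ha'.2]; simp
    rw [hta, mul_zero, zero_add] at hb3
    -- b incident but not loop at v: term is ±1 times C b ≠ 0
    have hb1 : ¬((ι b).1 = v ∧ (ι b).2 = v) := by
      intro hcon; exact hbnl (Prod.ext hcon.1 hcon.2)
    rcases hbdv.2 with hv | hv
    · have : (ι b).2 ≠ v := fun hcon => hb1 ⟨hv, hcon⟩
      rw [if_neg this, if_pos hv] at hb3
      rcases h1 b with h|h|h <;> simp [h] at hb3 hbdv <;> omega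
    · have : (ι b).1 ≠ v := fun hcon => hb1 ⟨hcon, hv⟩
      rw [if_neg this, if_pos hv] at hb3
      rcases h1 b with h|h|h <;> simp [h] at hb3 hbdv <;> omega
  · -- card 2: sum of two odd numbers
    obtain ⟨x, y, hxy, hsleq⟩ := Finset.card_eq_two.mp hc
    rw [hsleq, Finset.sum_pair hxy]
    have hxs : x ∈ sl := by rw [hsleq]; simp
    have hys : y ∈ sl := by rw [hsleq]; simp
    rw [hsl, Finset.mem_filter] at hxs hys
    have hx : C x ≠ 0 := hxs.2.1
    have hy : C y ≠ 0 := hys.2.1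
    rcases h1 x with h|h|h <;> rcases h1 y with h'|h'|h' <;> simp [h, h'] at hx hy ⊢ <;> omega

/-- decomposition of a cycle-reversal chain -/
lemma aux_rev_decomp (ι : E → V × V) {σ σ' : E → ℤ}
    (h : Relation.ReflTransGen (RevStep ι) σ σ') :
    ∃ x : E → ℤ,
      (∀ e, σ' e = σ e - 2 * x e) ∧
      (∀ v : V, ∑ e : E, x e *
        ((if (ι e).2 = v then 1 else 0) - (if (ι e).1 = v then 1 else 0)) = 0) ∧
      (∀ v : V, Even (∑ e ∈ Finset.univ.filter (fun e => ι e = (v, v)), x e)) := by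
  induction h with
  | refl => exact ⟨fun _ => 0, by simp, by simp, by simp⟩
  | tail hst hstep ih =>
    obtain ⟨x, hx1, hx2, hx3⟩ := ih
    obtain ⟨C, ⟨hCvec, hCdir⟩, hτ⟩ := hstep
    refine ⟨fun e => x e + C e, fun e => ?_, fun v => ?_, fun v => ?_⟩
    · rw [hτ e]
      have hb : (fun e => x e + C e) e = x e + C e := rfl
      rw [hb]
      by_cases h0 : C e ≠ 0
      · rw [if_pos h0]
        have hC := hCdir e h0
        rw [hx1 e] at hC ⊢
        linarith
      · rw [if_neg h0, hx1 e]
        rw [not_not] at h0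
        rw [h0]; ring
    · have := hCvec.2.2.1 v
      have h2 := hx2 v
      simp only [add_mul, Finset.sum_add_distrib, h2, this, add_zero]
    · have := aux_loop_parity ι hCvec v
      have h3 := hx3 v
      rw [Finset.sum_add_distrib]
      exact h3.add this

lemma aux_loop_pair (ι : E → V × V) (x : E → ℤ)
    (hx : ∀ e, x e = 0 ∨ x e = 1 ∨ x e = -1) {e0 e1 : E} (hne : e0 ≠ e1) (v : V)
    (h0 : ι e0 = (v, v)) (h1 : ι e1 = (v, v)) (hx0 : x e0 ≠ 0) (hx1 : x e1 ≠ 0) :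
    ∃ C : E → ℤ, IsCycleVec ι C ∧ ∀ e, C e ≠ 0 → C e = x e := by
  classical
  set C : E → ℤ := fun e => if e = e0 ∨ e = e1 then x e else 0 with hC
  have hsupp : ∀ e, C e ≠ 0 ↔ (e = e0 ∨ e = e1) := by
    intro e
    constructor
    · intro h; by_contra hcon; rw [hC] at h; simp only [if_neg hcon] at h; exact h rfl
    · rintro (rfl | rfl) <;> simp [hC, hx0, hx1]
  refine ⟨C, ⟨?_, ⟨e0, (hsupp e0).mpr (Or.inl rfl)⟩, ?_, ?_, ?_⟩, ?_⟩
  · intro e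
    by_cases h : e = e0 ∨ e = e1
    · rw [hC]; simp only [if_pos h]; exact hx e
    · left; rw [hC]; simp only [if_neg h]
  · intro w
    apply Finset.sum_eq_zero
    intro e _
    by_cases h : e = e0 ∨ e = e1
    · have hloop : ι e = (v, v) := by rcases h with rfl | rfl <;> assumption
      rw [hloop]; simp
    · rw [hC]; simp only [if_neg h]; ring
  · intro w
    by_cases hw : w = v
    · right
      subst hw
      have : (Finset.univ.filter fun e => C e ≠ 0 ∧ ((ι e).1 = w ∨ (ι e).2 = w)) = {e0, e1} := by
        ext e
        simp only [Finset.mem_filter, Finset.mem_univ, true_and, Finset.mem_insert,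
          Finset.mem_singleton]
        constructor
        · intro h; exact (hsupp e).mp h.1
        · intro h
          refine ⟨(hsupp e).mpr h, ?_⟩
          rcases h with rfl | rfl <;> rw [‹ι _ = (w, w)›] <;> left <;> rfl
      rw [this, Finset.card_pair hne]
    · left
      rw [Finset.card_eq_zero, Finset.filter_eq_empty_iff]
      intro e _
      rintro ⟨hce, hinc⟩
      have hloop : ι e = (v, v) := by rcases (hsupp e).mp hce with rfl | rfl <;> assumption
      rw [hloop] at hinc
      simp at hinc
      exact hw (hinc ▸ rfl)
  · intro a b ha hb
    have hav : ∀ c : V, (∃ e, C e ≠ 0 ∧ ((ι e).1 = c ∨ (ι e).2 = c)) → c = v := by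
      rintro c ⟨e, hce, hinc⟩
      have hloop : ι e = (v, v) := by rcases (hsupp e).mp hce with rfl | rfl <;> assumption
      rw [hloop] at hinc
      rcases hinc with h | h <;> exact h.symm ▸ rfl
    rw [hav a ha, hav b hb]
    exact Relation.ReflTransGen.refl
  · intro e he
    rw [hC]; simp only [if_pos ((hsupp e).mp he)]

lemma aux_exists_cycle (ι : E → V × V) (y : E → ℤ)
    (hy : ∀ e, y e = 0 ∨ y e = 1 ∨ y e = -1)
    (hyne : ∃ e, y e ≠ 0)
    (hbd : ∀ v : V, ∑ e : E, y e *
      ((if (ι e).2 = v then 1 else 0) - (if (ι e).1 = v then 1 else 0)) = 0)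
    (hnl : ∀ e, y e ≠ 0 → (ι e).1 ≠ (ι e).2) :
    ∃ C : E → ℤ, IsCycleVec ι C ∧ ∀ e, C e ≠ 0 → C e = y e := by
  classical
  -- directed head and tail of each support edge
  set dt : E → V := fun e => if y e = 1 then (ι e).1 else (ι e).2 with hdt
  set dh : E → V := fun e => if y e = 1 then (ι e).2 else (ι e).1 with hdh
  have hcard : ∀ v : V,
      (Finset.univ.filter fun e => y e ≠ 0 ∧ dh e = v).card =
      (Finset.univ.filter fun e => y e ≠ 0 ∧ dt e = v).card := by
    intro v
    have hb := hbd v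
    have hterm : ∀ e : E, y e *
        ((if (ι e).2 = v then 1 else 0) - (if (ι e).1 = v then 1 else 0)) =
        (if y e ≠ 0 ∧ dh e = v then (1:ℤ) else 0) -
        (if y e ≠ 0 ∧ dt e = v then (1:ℤ) else 0) := by
      intro e
      rcases hy e with h | h | h
      · simp [h]
      · simp only [hdh, hdt, h, if_pos rfl]
        have : (1:ℤ) ≠ 0 := one_ne_zero
        simp [h, this]
      · have hne : y e ≠ 0 := by rw [h]; decide
        simp only [hdh, hdt, h, if_neg (by decide : ¬(-1:ℤ) = 1), hne, true_and]
        by_cases h1 : (ι e).1 = v <;> by_cases h2 : (ι e).2 = v <;> simp [h1, h2]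
    rw [Finset.sum_congr rfl (fun e _ => hterm e), Finset.sum_sub_distrib,
      Finset.sum_boole, Finset.sum_boole, sub_eq_zero] at hb
    exact_mod_cast hb
  have hout : ∀ v : V, (∃ e, y e ≠ 0 ∧ dh e = v) → ∃ e, y e ≠ 0 ∧ dt e = v := by
    intro v ⟨e, he⟩
    have h1 : 0 < (Finset.univ.filter fun e => y e ≠ 0 ∧ dh e = v).card :=
      Finset.card_pos.mpr ⟨e, Finset.mem_filter.mpr ⟨Finset.mem_univ _, he⟩⟩
    rw [hcard v] at h1
    obtain ⟨e', he'⟩ := Finset.card_pos.mp h1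
    exact ⟨e', (Finset.mem_filter.mp he').2⟩
  -- build the walk
  obtain ⟨f, ε, hfε⟩ : ∃ (f : ℕ → V) (ε : ℕ → E),
      ∀ n, y (ε n) ≠ 0 ∧ dt (ε n) = f n ∧ dh (ε n) = f (n + 1) := by
    let S := {v : V // ∃ e, y e ≠ 0 ∧ dh e = v}
    have hS : ∀ s : S, ∃ e, y e ≠ 0 ∧ dt e = s.1 := fun s => hout s.1 s.2
    let pick : S → E := fun s => Classical.choose (hS s)
    have hpick : ∀ s : S, y (pick s) ≠ 0 ∧ dt (pick s) = s.1 :=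
      fun s => Classical.choose_spec (hS s)
    let nxt : S → S := fun s => ⟨dh (pick s), pick s, (hpick s).1, rfl⟩
    obtain ⟨e₁, he₁⟩ := hyne
    let s0 : S := ⟨dh e₁, e₁, he₁, rfl⟩
    refine ⟨fun n => (nxt^[n] s0).1, fun n => pick (nxt^[n] s0),
      fun n => ⟨(hpick _).1, (hpick _).2, ?_⟩⟩
    show dh (pick (nxt^[n] s0)) = (nxt^[n+1] s0).1
    rw [Function.iterate_succ_apply' nxt n s0]
  -- no loops along the walk, and the endpoints of ε k
  have hdt1 : ∀ e, y e = 1 → dt e = (ι e).1 ∧ dh e = (ι e).2 := by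
    intro e h
    constructor <;> simp only [hdt, hdh] <;> rw [if_pos h]
  have hdt2 : ∀ e, y e = -1 → dt e = (ι e).2 ∧ dh e = (ι e).1 := by
    intro e h
    constructor <;> simp only [hdt, hdh] <;> rw [h, if_neg (by decide : ¬(-1:ℤ) = 1)]
  have hends : ∀ k, ((ι (ε k)).1 = f k ∧ (ι (ε k)).2 = f (k + 1)) ∨
      ((ι (ε k)).1 = f (k + 1) ∧ (ι (ε k)).2 = f k) := by
    intro k
    obtain ⟨h0, h1, h2⟩ := hfε k
    rcases hy (ε k) with h | h | h
    · exact absurd h h0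
    · left
      rw [(hdt1 _ h).1] at h1; rw [(hdt1 _ h).2] at h2
      exact ⟨h1, h2⟩
    · right
      rw [(hdt2 _ h).1] at h1; rw [(hdt2 _ h).2] at h2
      exact ⟨h2, h1⟩
  have hstep : ∀ k, f k ≠ f (k + 1) := by
    intro k hcon
    obtain ⟨h0, _, _⟩ := hfε k
    rcases hends k with ⟨ha, hb⟩ | ⟨ha, hb⟩ <;>
      exact hnl (ε k) h0 (by rw [ha, hb, hcon]) <;> rw [ha, hb, hcon]
  -- pigeonhole
  have hPex : ∃ j, ∃ i, i < j ∧ f i = f j := by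
    obtain ⟨a, b, hab, hfab⟩ := Finite.exists_ne_map_eq_of_infinite f
    rcases Nat.lt_or_ge a b with h | h
    · exact ⟨b, a, h, hfab⟩
    · exact ⟨a, b, lt_of_le_of_ne h (Ne.symm hab), hfab.symm⟩
  set j0 := Nat.find hPex with hj0
  obtain ⟨i0, hij, hfij⟩ := Nat.find_spec hPex
  rw [← hj0] at hij hfij
  have hmin : ∀ m, m < j0 → ¬∃ i, i < m ∧ f i = f m := fun m hm => Nat.find_min hPex hm
  have hinj : ∀ k ∈ Finset.Ico i0 j0, ∀ l ∈ Finset.Ico i0 j0, f k = f l → k = l := by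
    intro k hk l hl hkl
    rw [Finset.mem_Ico] at hk hl
    rcases Nat.lt_trichotomy k l with h | h | h
    · exact absurd ⟨k, h, hkl⟩ (hmin l hl.2)
    · exact h
    · exact absurd ⟨l, h, hkl.symm⟩ (hmin k hk.2)
  have hεinj : ∀ k ∈ Finset.Ico i0 j0, ∀ l ∈ Finset.Ico i0 j0, ε k = ε l → k = l := by
    intro k hk l hl hkl
    apply hinj k hk l hl
    rw [← (hfε k).2.1, ← (hfε l).2.1, hkl]
  set C : E → ℤ := fun e => if e ∈ (Finset.Ico i0 j0).image ε then y e else 0 with hC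
  have hCsupp : ∀ e, C e ≠ 0 ↔ e ∈ (Finset.Ico i0 j0).image ε := by
    intro e
    constructor
    · intro h; by_contra hcon; rw [hC] at h; simp only [if_neg hcon] at h; exact h rfl
    · intro h
      rw [hC]; simp only [if_pos h]
      obtain ⟨k, hk, rfl⟩ := Finset.mem_image.mp h
      exact (hfε k).1
  have hCy : ∀ e, C e ≠ 0 → C e = y e := by
    intro e he
    rw [hC]; simp only [if_pos ((hCsupp e).mp he)]
  have hi0mem : i0 ∈ Finset.Ico i0 j0 := Finset.mem_Ico.mpr ⟨le_refl _, hij⟩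
  refine ⟨C, ⟨?_, ⟨ε i0, (hCsupp _).mpr (Finset.mem_image_of_mem ε hi0mem)⟩, ?_, ?_, ?_⟩, hCy⟩
  -- entries
  · intro e
    by_cases h : e ∈ (Finset.Ico i0 j0).image ε
    · rw [hC]; simp only [if_pos h]; exact hy e
    · left; rw [hC]; simp only [if_neg h]
  -- boundary
  · intro v
    have hz : ∀ e ∈ Finset.univ, e ∉ (Finset.Ico i0 j0).image ε →
        C e * ((if (ι e).2 = v then (1:ℤ) else 0) - (if (ι e).1 = v then 1 else 0)) = 0 := by
      intro e _ he
      rw [hC]; simp only [if_neg he, zero_mul]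
    rw [← Finset.sum_subset (Finset.subset_univ _) hz]
    rw [Finset.sum_image hεinj]
    have hterm : ∀ k ∈ Finset.Ico i0 j0, C (ε k) *
        ((if (ι (ε k)).2 = v then (1:ℤ) else 0) - (if (ι (ε k)).1 = v then 1 else 0)) =
        (if f (k+1) = v then (1:ℤ) else 0) - (if f k = v then 1 else 0) := by
      intro k hk
      have hce : C (ε k) = y (ε k) := hCy _ ((hCsupp _).mpr (Finset.mem_image_of_mem ε hk))
      rw [hce]
      obtain ⟨h0, h1, h2⟩ := hfε k
      rcases hy (ε k) with h | h | h
      · exact absurd h h0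
      · rw [(hdt1 _ h).1] at h1; rw [(hdt1 _ h).2] at h2
        rw [h, h1, h2]; ring
      · rw [(hdt2 _ h).1] at h1; rw [(hdt2 _ h).2] at h2
        rw [h, h1, h2]; ring
    rw [Finset.sum_congr rfl hterm]
    rw [Finset.sum_Ico_eq_sub _ (le_of_lt hij)]
    rw [Finset.sum_range_sub (fun k => if f k = v then (1:ℤ) else 0),
      Finset.sum_range_sub (fun k => if f k = v then (1:ℤ) else 0)]
    rw [hfij]
    ring
  -- degree
  · intro v
    have himg : (Finset.univ.filter fun e => C e ≠ 0 ∧ ((ι e).1 = v ∨ (ι e).2 = v)) =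
        ((Finset.Ico i0 j0).filter fun k => f k = v ∨ f (k + 1) = v).image ε := by
      ext e
      simp only [Finset.mem_filter, Finset.mem_univ, true_and, Finset.mem_image]
      constructor
      · rintro ⟨hce, hinc⟩
        obtain ⟨k, hk, rfl⟩ := Finset.mem_image.mp ((hCsupp e).mp hce)
        refine ⟨k, ⟨hk, ?_⟩, rfl⟩
        rcases hends k with ⟨ha, hb⟩ | ⟨ha, hb⟩ <;> rw [← ha, ← hb] <;> tauto
      · rintro ⟨k, hk, rfl⟩
        refine ⟨(hCsupp _).mpr (Finset.mem_image_of_mem ε hk.1), ?_⟩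
        have h2 := hk.2
        rcases hends k with ⟨ha, hb⟩ | ⟨ha, hb⟩ <;> rw [ha, hb] <;> tauto
    rw [himg]
    rw [Finset.card_image_of_injOn (fun k hk l hl =>
      hεinj k (Finset.mem_of_mem_filter k hk) l (Finset.mem_of_mem_filter l hl))]
    have hAB : ((Finset.Ico i0 j0).filter fun k => f k = v ∨ f (k + 1) = v) =
        ((Finset.Ico i0 j0).filter fun k => f k = v) ∪
        ((Finset.Ico i0 j0).filter fun k => f (k + 1) = v) := Finset.filter_or _ _ _
    have hdisj : Disjoint ((Finset.Ico i0 j0).filter fun k => f k = v)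
        ((Finset.Ico i0 j0).filter fun k => f (k + 1) = v) := by
      rw [Finset.disjoint_left]
      intro k hk1 hk2
      rw [Finset.mem_filter] at hk1 hk2
      exact hstep k (hk1.2.trans hk2.2.symm)
    have hABcard : ((Finset.Ico i0 j0).filter fun k => f k = v).card =
        ((Finset.Ico i0 j0).filter fun k => f (k + 1) = v).card := by
      apply Finset.card_bij (fun k _ => if k = i0 then j0 - 1 else k - 1)
      · intro k hk
        rw [Finset.mem_filter, Finset.mem_Ico] at hk
        obtain ⟨⟨hk1, hk2⟩, hk3⟩ := hk
        by_cases h : k = i0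
        · rw [if_pos h]
          rw [Finset.mem_filter, Finset.mem_Ico]
          have hj1 : j0 - 1 + 1 = j0 := by omega
          refine ⟨⟨by omega, by omega⟩, ?_⟩
          rw [hj1, ← hfij, ← h, hk3]
        · rw [if_neg h]
          rw [Finset.mem_filter, Finset.mem_Ico]
          have hk1' : k - 1 + 1 = k := by omega
          exact ⟨⟨by omega, by omega⟩, by rw [hk1', hk3]⟩
      · intro a ha b hb hab
        rw [Finset.mem_filter, Finset.mem_Ico] at ha hb
        have hab' : (if a = i0 then j0 - 1 else a - 1) = (if b = i0 then j0 - 1 else b - 1) := hab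
        by_cases h1 : a = i0 <;> by_cases h2 : b = i0
        · rw [h1, h2]
        · rw [if_pos h1, if_neg h2] at hab'; omega
        · rw [if_neg h1, if_pos h2] at hab'; omega
        · rw [if_neg h1, if_neg h2] at hab'; omega
      · intro b hb
        rw [Finset.mem_filter, Finset.mem_Ico] at hb
        obtain ⟨⟨hb1, hb2⟩, hb3⟩ := hb
        by_cases h : b + 1 = j0
        · refine ⟨i0, ?_, ?_⟩
          · rw [Finset.mem_filter, Finset.mem_Ico]
            exact ⟨⟨le_refl _, hij⟩, by rw [hfij, ← h]; exact hb3⟩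
          · show (if i0 = i0 then j0 - 1 else i0 - 1) = b
            rw [if_pos rfl]; omega
        · refine ⟨b + 1, ?_, ?_⟩
          · rw [Finset.mem_filter, Finset.mem_Ico]
            exact ⟨⟨by omega, by omega⟩, hb3⟩
          · show (if b + 1 = i0 then j0 - 1 else b + 1 - 1) = b
            rw [if_neg (by omega)]
            omega
    have hA1 : ((Finset.Ico i0 j0).filter fun k => f k = v).card ≤ 1 := by
      rw [Finset.card_le_one]
      intro a ha b hb
      rw [Finset.mem_filter] at ha hb
      exact hinj a ha.1 b hb.1 (ha.2.trans hb.2.symm)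
    rw [hAB, Finset.card_union_of_disjoint hdisj]
    omega
  -- connectivity
  · intro a b ha hb
    have hreach : ∀ m, i0 ≤ m → m ≤ j0 → ReachIn ι {e | C e ≠ 0} (f i0) (f m) := by
      intro m hm
      induction m, hm using Nat.le_induction with
      | base => intro _; exact Relation.ReflTransGen.refl
      | succ n hn ih =>
        intro hsucc
        have hn' : n < j0 := hsucc
        have hr := ih (le_of_lt hn')
        refine Relation.ReflTransGen.tail hr ⟨ε n, ?_, ?_⟩
        · exact (hCsupp _).mpr (Finset.mem_image_of_mem ε (Finset.mem_Ico.mpr ⟨hn, hn'⟩))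
        · rcases hends n with ⟨h1, h2⟩ | ⟨h1, h2⟩
          · left; rw [← h1, ← h2]
          · right; rw [← h1, ← h2]
    have htouch : ∀ c : V, (∃ e, C e ≠ 0 ∧ ((ι e).1 = c ∨ (ι e).2 = c)) →
        ∃ m, i0 ≤ m ∧ m ≤ j0 ∧ f m = c := by
      rintro c ⟨e, hce, hinc⟩
      obtain ⟨k, hk, rfl⟩ := Finset.mem_image.mp ((hCsupp e).mp hce)
      rw [Finset.mem_Ico] at hk
      have : f k = c ∨ f (k + 1) = c := by
        rcases hends k with ⟨h1, h2⟩ | ⟨h1, h2⟩ <;> rcases hinc with h | h <;>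
          [left; right; right; left] <;> first
          | (rw [← h1]; exact h) | (rw [← h2]; exact h)
      rcases this with h | h
      · exact ⟨k, hk.1, le_of_lt hk.2, h⟩
      · exact ⟨k + 1, le_trans hk.1 (Nat.le_succ k), hk.2, h⟩
    obtain ⟨ma, hma1, hma2, hma3⟩ := htouch a ha
    obtain ⟨mb, hmb1, hmb2, hmb3⟩ := htouch b hb
    have hsym : Symmetric (fun x z : V => ∃ e ∈ {e | C e ≠ 0}, ι e = (x, z) ∨ ι e = (z, x)) := by
      rintro x z ⟨e, he, h | h⟩ <;> exact ⟨e, he, by tauto⟩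
    have h1 := hreach ma hma1 hma2
    have h2 := hreach mb hmb1 hmb2
    rw [hma3] at h1; rw [hmb3] at h2
    haveI : Std.Symm (fun x z : V => ∃ e ∈ {e | C e ≠ 0}, ι e = (x, z) ∨ ι e = (z, x)) := ⟨fun a b h => hsym h⟩
    exact Relation.ReflTransGen.trans (Std.Symm.symm _ _ h1) h2

theorem faithful_orientation_unique (ι : E → V × V) (hconn : Conn ι Set.univ)
    (𝔠 : Set (E → ℤ)) (hcfg : IsConfig ι 𝔠) (hacyc : ConfigAcyclic 𝔠)
    (σ σ' : E → ℤ) (hσ : IsOrient σ) (hσ' : IsOrient σ')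
    (hclass : Relation.ReflTransGen (RevStep ι) σ σ')
    (hf : Faithful ι 𝔠 σ) (hf' : Faithful ι 𝔠 σ') :
    σ = σ' := by
  classical
  obtain ⟨x, hx1, hx2, hx3⟩ := aux_rev_decomp ι hclass
  by_contra hnee
  have hsign : ∀ e, x e ≠ 0 → x e = σ e ∧ x e = -σ' e := by
    intro e he
    have h := hx1 e
    rcases hσ e with h1 | h1 <;> rcases hσ' e with h2 | h2 <;> rw [h1, h2] at h ⊢ <;> omega
  have hxentries : ∀ e, x e = 0 ∨ x e = 1 ∨ x e = -1 := by
    intro e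
    by_cases he : x e = 0
    · exact Or.inl he
    · right
      have h := (hsign e he).1
      rcases hσ e with h1 | h1 <;> rw [h1] at h
      · exact Or.inl h
      · exact Or.inr h
  have hxne : ∃ e, x e ≠ 0 := by
    by_contra hcon
    push_neg at hcon
    apply hnee
    funext e
    have h := hx1 e
    rw [hcon e] at h
    omega
  have hfinal : ∀ C : E → ℤ, IsCycleVec ι C → (∀ e, C e ≠ 0 → C e = x e) → False := by
    intro C hCvec hCx
    have hC𝔠 : C ∈ 𝔠 := by
      apply hf
      refine ⟨hCvec, fun e he => ?_⟩
      have hxe : x e ≠ 0 := by rw [← hCx e he]; exact he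
      rw [hCx e he]
      exact (hsign e hxe).1
    have hC'𝔠 : (fun e => -C e) ∈ 𝔠 := by
      apply hf'
      refine ⟨aux_neg_cycleVec ι hCvec, fun e he => ?_⟩
      have he' : C e ≠ 0 := fun h0 => he (by simp [h0])
      have hxe : x e ≠ 0 := by rw [← hCx e he']; exact he'
      have h2 := (hsign e hxe).2
      show -C e = σ' e
      rw [hCx e he', h2, neg_neg]
    exact ((hcfg.2 C hCvec).mp hC𝔠) hC'𝔠
  set y : E → ℤ := fun e => if (ι e).1 ≠ (ι e).2 then x e else 0 with hydef
  by_cases hcase : ∃ e, y e ≠ 0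
  · -- there is a non-loop edge in the support of x
    have hyx : ∀ e, y e ≠ 0 → y e = x e ∧ (ι e).1 ≠ (ι e).2 := by
      intro e he
      by_cases hl : (ι e).1 ≠ (ι e).2
      · refine ⟨?_, hl⟩; rw [hydef]; simp only [if_pos hl]
      · exfalso; apply he; rw [hydef]; simp only [if_neg hl]
    have hyent : ∀ e, y e = 0 ∨ y e = 1 ∨ y e = -1 := by
      intro e
      by_cases he : y e = 0
      · exact Or.inl he
      · rw [(hyx e he).1]
        rcases hxentries e with h | h | h
        · exact Or.inl h
        · exact Or.inr (Or.inl h)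
        · exact Or.inr (Or.inr h)
    have hybd : ∀ w : V, ∑ e : E, y e *
        ((if (ι e).2 = w then 1 else 0) - (if (ι e).1 = w then 1 else 0)) = 0 := by
      intro w
      have h := hx2 w
      have hcg : (∑ e : E, y e *
          ((if (ι e).2 = w then 1 else 0) - (if (ι e).1 = w then 1 else 0))) =
          ∑ e : E, x e *
          ((if (ι e).2 = w then 1 else 0) - (if (ι e).1 = w then 1 else 0)) := by
        apply Finset.sum_congr rfl
        intro e _
        by_cases hl : (ι e).1 ≠ (ι e).2
        · rw [hydef]; simp only [if_pos hl]
        · rw [not_not] at hl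
          rw [hydef]; simp only [if_neg (not_not_intro hl)]
          rw [← hl]
          ring
      exact hcg.trans h
    obtain ⟨C, hCvec, hCy⟩ := aux_exists_cycle ι y hyent hcase hybd
      (fun e he => (hyx e he).2)
    apply hfinal C hCvec
    intro e he
    rw [hCy e he]
    exact (hyx e (by rw [← hCy e he]; exact he)).1
  · -- the support of x consists of loops only
    push_neg at hcase
    obtain ⟨e0, he0⟩ := hxne
    have hloop0 : (ι e0).1 = (ι e0).2 := by
      by_contra hl
      apply he0
      have := hcase e0
      rw [hydef] at this
      simp only [if_pos hl] at this
      exact this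
    set v := (ι e0).1 with hv
    have hι0 : ι e0 = (v, v) := Prod.ext rfl hloop0.symm
    have hpar := hx3 v
    have hex1 : ∃ e1, e1 ≠ e0 ∧ ι e1 = (v, v) ∧ x e1 ≠ 0 := by
      by_contra hcon2
      push_neg at hcon2
      have hsum : ∑ e ∈ Finset.univ.filter (fun e => ι e = (v, v)), x e = x e0 := by
        apply Finset.sum_eq_single_of_mem e0
          (Finset.mem_filter.mpr ⟨Finset.mem_univ _, hι0⟩)
        intro e he hne'
        exact hcon2 e hne' (Finset.mem_filter.mp he).2
      rw [hsum] at hpar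
      rcases hxentries e0 with h | h | h
      · exact he0 h
      · rw [h] at hpar; exact (by decide : ¬ Even (1:ℤ)) hpar
      · rw [h] at hpar; exact (by decide : ¬ Even (-1:ℤ)) hpar
    obtain ⟨e1, hne1, hι1, hxe1⟩ := hex1
    obtain ⟨C, hCvec, hCx⟩ := aux_loop_pair ι x hxentries hne1.symm v hι0 hι1 he0 hxe1
    exact hfinal C hCvec hCx
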